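/- arXiv:2203.09273 — 2 statements merged into one kernel-verified Lean document; each statement's English description precedes it below -/
import Mathlib

section
/- For every integer k ≥ 1, every X ∈ ℕ, and every real ξ, the oscillatory integral v(ξ) = ∫_0^X e^{2πi ξ z^k} dz satisfies |v(ξ)| ≤ C_k · X · (1 + X^k |ξ|)^{-1/k} for a constant C_k depending only on k. -/
open intervalIntegral Complex Real Set

noncomputable def e (x : ℝ) : ℂ := Complex.exp (2 * Real.pi * Complex.I * x)

noncomputable def oscInt (k : ℕ) (X : ℝ) (ξ : ℝ) : ℂ := ∫ z in (0:ℝ)..X, e (ξ * z ^ k)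

lemma e_eq (ξ z : ℝ) (k : ℕ) :
    e (ξ * z ^ k) = Complex.exp ((2 * Real.pi * Complex.I * ξ) * (z : ℂ) ^ k) := by
  unfold e; push_cast; ring_nf

lemma norm_exp_c (ξ z : ℝ) (k : ℕ) :
    ‖Complex.exp ((2 * Real.pi * Complex.I * ξ) * (z : ℂ) ^ k)‖ = 1 := by
  rw [Complex.norm_exp]
  have : ((2 * Real.pi * Complex.I * ξ) * (z : ℂ) ^ k).re = 0 := by
    have : ((z:ℂ)^k) = ((z^k : ℝ) : ℂ) := by push_cast; ring
    rw [this]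
    simp [Complex.mul_re, Complex.mul_im]
    right; simp [← Complex.ofReal_pow]
  rw [this, Real.exp_zero]

lemma cont_e (ξ : ℝ) (k : ℕ) : Continuous (fun z : ℝ => e (ξ * z ^ k)) := by
  unfold e
  fun_prop


lemma norm_c (ξ : ℝ) : ‖(2 * Real.pi * Complex.I * ξ : ℂ)‖ = 2 * Real.pi * |ξ| := by
  simp [Complex.norm_real, abs_of_pos Real.pi_pos]

lemma c_ne (ξ : ℝ) (hξ : ξ ≠ 0) : (2 * Real.pi * Complex.I * ξ : ℂ) ≠ 0 := by
  simp [Complex.ext_iff, Real.pi_ne_zero, hξ, Complex.I_ne_zero]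

set_option maxHeartbeats 1000000 in
lemma partA (k : ℕ) (hk : 1 ≤ k) (ξ : ℝ) (hξ : ξ ≠ 0) (δ X : ℝ) (hδ : 0 < δ) (hX : δ ≤ X) :
    ‖∫ z in δ..X, e (ξ * z ^ k)‖ ≤ 3 / (2 * Real.pi * |ξ| * k * δ ^ (k - 1)) := by
  set c : ℂ := 2 * Real.pi * Complex.I * ξ with hc_def
  have hc : c ≠ 0 := c_ne ξ hξ
  have hcn : ‖c‖ = 2 * Real.pi * |ξ| := norm_c ξ
  have hcpos : 0 < ‖c‖ := norm_pos_iff.mpr hc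
  rcases eq_or_lt_of_le hk with h1 | h2
  · -- k = 1
    obtain rfl : k = 1 := h1.symm
    simp only [pow_one]
    have : ∀ z : ℝ, e (ξ * z) = Complex.exp (c * z) := by
      intro z; simpa using e_eq ξ z 1
    simp_rw [this]
    rw [integral_exp_mul_complex hc]
    have h1 : ‖Complex.exp (c * X) - Complex.exp (c * δ)‖ ≤ 2 := by
      calc ‖Complex.exp (c * X) - Complex.exp (c * δ)‖
          ≤ ‖Complex.exp (c * X)‖ + ‖Complex.exp (c * δ)‖ := norm_sub_le _ _
        _ ≤ 2 := by
            have a1 := norm_exp_c ξ X 1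
            have a2 := norm_exp_c ξ δ 1
            simp only [pow_one] at a1 a2
            rw [a1, a2]; norm_num
    rw [norm_div, hcn]
    norm_num
    have hpos : 0 < 2 * Real.pi * |ξ| := by positivity
    rw [div_le_div_iff₀ hpos hpos]
    nlinarith [h1, hpos]
  · -- k ≥ 2
    obtain ⟨m, rfl⟩ : ∃ m, k = m + 2 := ⟨k - 2, by omega⟩
    have hK1 : m + 2 - 1 = m + 1 := rfl
    set u : ℝ → ℂ := fun z => Complex.exp (c * (z:ℂ) ^ (m+2)) with hu_def
    set u' : ℝ → ℂ := fun z =>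
      Complex.exp (c * (z:ℂ) ^ (m+2)) * (c * (((m:ℂ)+2) * (z:ℂ) ^ (m+1))) with hu'_def
    set v : ℝ → ℂ := fun z => ((c * ((m:ℂ)+2)) * (z:ℂ) ^ (m+1))⁻¹ with hv_def
    set v' : ℝ → ℂ := fun z =>
      -((c * ((m:ℂ)+2)) * (((m:ℂ)+1) * (z:ℂ) ^ m)) / ((c * ((m:ℂ)+2)) * (z:ℂ) ^ (m+1)) ^ 2
      with hv'_def
    have hKc : ((m:ℂ) + 2) ≠ 0 := by
      intro h
      have := congrArg Complex.re h
      simp at this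
      nlinarith [this, (Nat.cast_nonneg m : (0:ℝ) ≤ m)]
    have hne : ∀ z : ℝ, z ≠ 0 → (c * ((m:ℂ)+2)) * (z:ℂ) ^ (m+1) ≠ 0 := by
      intro z hz
      have : (z:ℂ) ≠ 0 := Complex.ofReal_ne_zero.mpr hz
      exact mul_ne_zero (mul_ne_zero hc hKc) (pow_ne_zero _ this)
    have hu_deriv : ∀ z : ℝ, HasDerivAt u (u' z) z := by
      intro z
      have h1 := (((hasDerivAt_pow (m+2) ((z:ℝ):ℂ)).const_mul c).cexp).comp_ofReal
      simp only [hK1] at h1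
      convert h1 using 1
      push_cast
      ring
    have hv_deriv : ∀ z : ℝ, z ≠ 0 → HasDerivAt v (v' z) z := by
      intro z hz
      have h1 : HasDerivAt (fun w : ℂ => ((c * ((m:ℂ)+2)) * w ^ (m+1))⁻¹)
          (-((c * ((m:ℂ)+2)) * ((↑(m+1) : ℂ) * (z:ℂ) ^ (m + 1 - 1))) /
            ((c * ((m:ℂ)+2)) * (z:ℂ) ^ (m+1)) ^ 2) (z:ℂ) :=
        ((hasDerivAt_pow (m+1) ((z:ℝ):ℂ)).const_mul (c * ((m:ℂ)+2))).inv (by exact hne z hz)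
      have h2 := h1.comp_ofReal
      simp only [Nat.add_sub_cancel] at h2
      convert h2 using 1
      push_cast
      ring
    have hkey : ∀ z : ℝ, z ≠ 0 → u' z * v z = u z := by
      intro z hz
      have hzc : (z:ℂ) ≠ 0 := Complex.ofReal_ne_zero.mpr hz
      simp only [hu_def, hu'_def, hv_def]
      field_simp
    have huIcc : Set.uIcc δ X = Set.Icc δ X := Set.uIcc_of_le hX
    have hmem : ∀ z ∈ Set.uIcc δ X, 0 < z := by
      intro z hz
      rw [huIcc] at hz
      exact lt_of_lt_of_le hδ hz.1
    have hu_cont : Continuous u := by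
      apply Complex.continuous_exp.comp
      fun_prop
    have hu'_cont : Continuous u' := by
      apply Continuous.mul
      · apply Complex.continuous_exp.comp; fun_prop
      · fun_prop
    have hv_cont : ContinuousOn v (Set.uIcc δ X) := by
      apply ContinuousOn.inv₀
      · fun_prop
      · intro z hz; exact hne z (ne_of_gt (hmem z hz))
    have hv'_cont : ContinuousOn v' (Set.uIcc δ X) := by
      apply ContinuousOn.div
      · fun_prop
      · fun_prop
      · intro z hz; exact pow_ne_zero 2 (hne z (ne_of_gt (hmem z hz)))
    have huv'_int : IntervalIntegrable (fun z => u z * v' z) MeasureTheory.volume δ X :=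
      ((hu_cont.continuousOn).mul hv'_cont).intervalIntegrable
    have hu'v_int : IntervalIntegrable (fun z => u' z * v z) MeasureTheory.volume δ X :=
      ((hu'_cont.continuousOn).mul hv_cont).intervalIntegrable
    have ibp := intervalIntegral.integral_deriv_mul_eq_sub_of_hasDerivAt
      (u := u) (v := v) (u' := u') (v' := v') (a := δ) (b := X)
      hu_cont.continuousOn hv_cont
      (fun z hz => hu_deriv z)
      (fun z hz => hv_deriv z (by
        have : δ < z := by
          rcases hz with ⟨h1, _⟩
          simpa [min_eq_left hX] using h1
        exact ne_of_gt (lt_trans hδ this)))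
      (hu'_cont.intervalIntegrable δ X)
      (hv'_cont.intervalIntegrable)
    have hsplit : ∫ z in δ..X, (u' z * v z + u z * v' z) =
        (∫ z in δ..X, u' z * v z) + ∫ z in δ..X, u z * v' z :=
      intervalIntegral.integral_add hu'v_int huv'_int
    have hcongr : (∫ z in δ..X, u' z * v z) = ∫ z in δ..X, u z :=
      intervalIntegral.integral_congr (fun z hz => hkey z (ne_of_gt (hmem z hz)))
    have main : (∫ z in δ..X, u z) =
        (u X * v X - u δ * v δ) - ∫ z in δ..X, u z * v' z := by
      rw [← hcongr]
      rw [hsplit] at ibp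
      linear_combination ibp
    -- norms
    have hnu : ∀ z : ℝ, ‖u z‖ = 1 := fun z => norm_exp_c ξ z (m+2)
    have hnormK : ‖((m:ℂ)+2)‖ = (m:ℝ) + 2 := by
      rw [show ((m:ℂ)+2) = ((m+2 : ℕ):ℂ) by push_cast; ring]
      rw [Complex.norm_natCast]
      push_cast; ring
    have hnv : ∀ z : ℝ, 0 < z → ‖v z‖ = (‖c‖ * ((m:ℝ)+2) * z ^ (m+1))⁻¹ := by
      intro z hz
      simp only [hv_def, norm_inv, norm_mul, norm_pow, Complex.norm_real, hnormK,
        Real.norm_eq_abs, abs_of_pos hz]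
    set B : ℝ := (‖c‖ * ((m:ℝ)+2) * δ ^ (m+1))⁻¹ with hB_def
    have hBpos : 0 < B := by positivity
    have hvB : ∀ z : ℝ, δ ≤ z → ‖v z‖ ≤ B := by
      intro z hz
      rw [hnv z (lt_of_lt_of_le hδ hz), hB_def]
      have hp : δ ^ (m+1) ≤ z ^ (m+1) := pow_le_pow_left₀ hδ.le hz _
      apply inv_anti₀ (by positivity)
      exact mul_le_mul_of_nonneg_left hp (by positivity)
    -- bound the integral term
    set g : ℝ → ℝ := fun z => (((m:ℝ)+1) / (‖c‖ * ((m:ℝ)+2))) * z ^ (-((m:ℤ)+2)) with hg_def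
    have hg_cont : ContinuousOn g (Set.uIcc δ X) := by
      apply ContinuousOn.mul continuousOn_const
      apply ContinuousOn.zpow₀ continuousOn_id
      intro z hz
      exact Or.inl (ne_of_gt (hmem z hz))
    have hg_int : IntervalIntegrable g MeasureTheory.volume δ X := hg_cont.intervalIntegrable
    have hptwise : ∀ z ∈ Set.uIoc δ X, ‖u z * v' z‖ ≤ g z := by
      intro z hz
      rw [Set.uIoc_of_le hX] at hz
      have hzpos : 0 < z := lt_trans hδ hz.1
      have hzne : z ≠ 0 := ne_of_gt hzpos
      rw [norm_mul, hnu, one_mul]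
      have hnorm_m1 : ‖((m:ℂ)+1)‖ = (m:ℝ)+1 := by
        rw [show ((m:ℂ)+1) = ((m+1 : ℕ):ℂ) by push_cast; ring, Complex.norm_natCast]
        push_cast; ring
      have : ‖v' z‖ = (‖c‖ * ((m:ℝ)+2) * (((m:ℝ)+1) * z ^ m)) /
          (‖c‖ * ((m:ℝ)+2) * z ^ (m+1)) ^ 2 := by
        simp only [hv'_def, norm_div, norm_neg, norm_mul, norm_pow, Complex.norm_real,
          hnormK, hnorm_m1, Real.norm_eq_abs, abs_of_pos hzpos]
      rw [this]
      simp only [hg_def]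
      rw [zpow_neg, show ((m:ℤ)+2) = ((m+2 : ℕ) : ℤ) by push_cast; ring, zpow_natCast]
      apply le_of_eq
      have hR : ((m:ℝ)+1) / (‖c‖ * ((m:ℝ)+2)) * ((z:ℝ) ^ (m+2))⁻¹
          = ((m:ℝ)+1) / (‖c‖ * ((m:ℝ)+2) * z ^ (m+2)) := by
        rw [division_def, division_def, mul_assoc, ← mul_inv]
      rw [hR, div_eq_div_iff (by positivity) (by positivity)]
      ring
    have hgint_val : (∫ z in δ..X, g z) =
        (((m:ℝ)+1) / (‖c‖ * ((m:ℝ)+2))) * (((δ ^ (m+1))⁻¹ - (X ^ (m+1))⁻¹) / ((m:ℝ)+1)) := by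
      rw [hg_def, intervalIntegral.integral_const_mul]
      rw [integral_zpow (Or.inr ⟨by omega, by
        rw [huIcc]; intro h; exact absurd h.1 (not_le.mpr hδ)⟩)]
      congr 1
      have h1 : -((m:ℤ)+2) + 1 = -((m:ℤ)+1) := by ring
      rw [h1]
      rw [zpow_neg, zpow_neg, show ((m:ℤ)+1) = ((m+1 : ℕ) : ℤ) by push_cast; ring,
        zpow_natCast, zpow_natCast]
      push_cast
      rw [show (-((m:ℝ)+2)+1) = -((m:ℝ)+1) by ring, div_neg]
      ring
    have hXpow_pos : 0 < (X:ℝ) ^ (m+1) := pow_pos (lt_of_lt_of_le hδ hX) _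
    have hint_bound : ‖∫ z in δ..X, u z * v' z‖ ≤ B := by
      have h1 := intervalIntegral.norm_integral_le_of_norm_le
        (f := fun z => u z * v' z) (g := g) (μ := MeasureTheory.volume) (a := δ) (b := X) hX
        (MeasureTheory.ae_of_all _ (fun z hz => hptwise z (by rw [Set.uIoc_of_le hX]; exact hz)))
          hg_int
      refine h1.trans ?_
      rw [hgint_val]
      have hd : 0 < (δ:ℝ) ^ (m+1) := pow_pos hδ _
      have hmono : (X ^ (m+1))⁻¹ ≤ (δ ^ (m+1))⁻¹ := by
        apply inv_anti₀ hd
        exact pow_le_pow_left₀ hδ.le hX _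
      have hm1 : (0:ℝ) < (m:ℝ) + 1 := by positivity
      rw [div_mul_div_comm, mul_comm (‖c‖ * ((m:ℝ)+2)) ((m:ℝ)+1),
        mul_div_mul_left _ _ (ne_of_gt hm1), hB_def, mul_inv, div_eq_mul_inv, mul_comm]
      gcongr
      have hinv : (0:ℝ) ≤ (X ^ (m+1))⁻¹ := by positivity
      linarith
    -- assemble
    have hEint : (∫ z in δ..X, e (ξ * z ^ (m+2))) = ∫ z in δ..X, u z := by
      apply intervalIntegral.integral_congr
      intro z hz
      simp only [hu_def]
      exact e_eq ξ z (m+2)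
    rw [hEint, main]
    have h1 : ‖u X * v X - u δ * v δ - ∫ z in δ..X, u z * v' z‖ ≤ B + B + B := by
      calc ‖u X * v X - u δ * v δ - ∫ z in δ..X, u z * v' z‖
          ≤ ‖u X * v X - u δ * v δ‖ + ‖∫ z in δ..X, u z * v' z‖ := norm_sub_le _ _
        _ ≤ (‖u X * v X‖ + ‖u δ * v δ‖) + B := add_le_add (norm_sub_le _ _) hint_bound
        _ ≤ (B + B) + B := by
            refine add_le_add ?_ le_rfl
            apply add_le_add
            · rw [norm_mul, hnu, one_mul]; exact hvB X hX
            · rw [norm_mul, hnu, one_mul]; exact hvB δ le_rfl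
    refine h1.trans ?_
    rw [hB_def, hcn, hK1]
    apply le_of_eq
    push_cast
    rw [eq_div_iff (by positivity)]
    field_simp
    ring

lemma norm_e_one (ξ z : ℝ) (k : ℕ) : ‖e (ξ * z ^ k)‖ = 1 := by
  rw [e_eq]; exact norm_exp_c ξ z k

lemma triv_bound (ξ : ℝ) (k : ℕ) (a b : ℝ) (hab : a ≤ b) :
    ‖∫ z in a..b, e (ξ * z ^ k)‖ ≤ b - a := by
  have h := intervalIntegral.norm_integral_le_of_norm_le_const (C := 1)
    (f := fun z => e (ξ * z ^ k)) (a := a) (b := b)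
    (fun z _ => le_of_eq (norm_e_one ξ z k))
  simpa [_root_.abs_of_nonneg (sub_nonneg.mpr hab)] using h

set_option maxHeartbeats 1000000 in
lemma partB (k : ℕ) (hk : 1 ≤ k) (ξ : ℝ) (hξ : ξ ≠ 0) (X : ℝ) (hX : 0 ≤ X) :
    ‖∫ z in (0:ℝ)..X, e (ξ * z ^ k)‖ ≤ 2 * min X (|ξ| ^ (-(1/(k:ℝ)))) := by
  have hξpos : 0 < |ξ| := abs_pos.mpr hξ
  set δ : ℝ := |ξ| ^ (-(1/(k:ℝ))) with hδ_def
  have hδpos : 0 < δ := Real.rpow_pos_of_pos hξpos _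
  rcases le_total X δ with h | h
  · have h1 := triv_bound ξ k 0 X hX
    rw [sub_zero] at h1
    have : min X δ = X := min_eq_left h
    rw [this]
    linarith
  · have hint1 : IntervalIntegrable (fun z => e (ξ * z ^ k)) MeasureTheory.volume 0 δ :=
      (cont_e ξ k).intervalIntegrable 0 δ
    have hint2 : IntervalIntegrable (fun z => e (ξ * z ^ k)) MeasureTheory.volume δ X :=
      (cont_e ξ k).intervalIntegrable δ X
    have hsplit : (∫ z in (0:ℝ)..X, e (ξ * z ^ k)) =
        (∫ z in (0:ℝ)..δ, e (ξ * z ^ k)) + ∫ z in δ..X, e (ξ * z ^ k) :=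
      (intervalIntegral.integral_add_adjacent_intervals hint1 hint2).symm
    have b1 : ‖∫ z in (0:ℝ)..δ, e (ξ * z ^ k)‖ ≤ δ := by
      have := triv_bound ξ k 0 δ hδpos.le
      simpa using this
    have b2 : ‖∫ z in δ..X, e (ξ * z ^ k)‖ ≤ 3 / (2 * Real.pi * |ξ| * k * δ ^ (k-1)) :=
      partA k hk ξ hξ δ X hδpos h
    have hpow : δ ^ k = |ξ|⁻¹ := by
      rw [hδ_def, ← Real.rpow_natCast (|ξ| ^ (-(1/(k:ℝ)))) k, ← Real.rpow_mul hξpos.le]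
      rw [show (-(1/(k:ℝ))) * k = -1 by field_simp]
      exact Real.rpow_neg_one _
    have hxi1 : |ξ| * δ ^ k = 1 := by rw [hpow]; field_simp
    have hstep : δ ^ (k-1) * δ = δ ^ k := by
      rw [← pow_succ]; congr 1; omega
    have key : 3 / (2 * Real.pi * |ξ| * k * δ ^ (k-1)) ≤ δ := by
      have hkR : (1:ℝ) ≤ (k:ℝ) := by exact_mod_cast hk
      rw [div_le_iff₀ (by positivity)]
      have e1 : δ * (2 * Real.pi * |ξ| * (k:ℝ) * δ ^ (k-1)) =
          2 * Real.pi * (k:ℝ) * (|ξ| * δ ^ k) := by rw [← hstep]; ring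
      rw [e1, hxi1, mul_one]
      nlinarith [Real.pi_gt_three]
    have hmin : min X δ = δ := min_eq_right h
    rw [hsplit, hmin]
    calc ‖(∫ z in (0:ℝ)..δ, e (ξ * z ^ k)) + ∫ z in δ..X, e (ξ * z ^ k)‖
        ≤ ‖∫ z in (0:ℝ)..δ, e (ξ * z ^ k)‖ + ‖∫ z in δ..X, e (ξ * z ^ k)‖ := norm_add_le _ _
      _ ≤ δ + δ := add_le_add b1 (b2.trans key)
      _ = 2 * δ := by ring

theorem osc_integral_decay (k : ℕ) (hk : 1 ≤ k) :
    ∃ C : ℝ, 0 < C ∧ ∀ (X : ℕ) (ξ : ℝ),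
      ‖oscInt k X ξ‖ ≤ C * X * (1 + (X : ℝ) ^ k * |ξ|) ^ (-(1 / (k : ℝ))) := by
  refine ⟨4, by norm_num, ?_⟩
  intro X ξ
  have hXnn : (0:ℝ) ≤ (X:ℝ) := Nat.cast_nonneg X
  have hk0 : (0:ℝ) < (k:ℝ) := by exact_mod_cast hk
  by_cases hξ : ξ = 0
  · subst hξ
    have : oscInt k X 0 = ((X:ℝ) : ℂ) := by
      unfold oscInt
      simp [e]
    rw [this]
    simp only [abs_zero, mul_zero, add_zero, Real.one_rpow]
    rw [Complex.norm_real, Real.norm_eq_abs, _root_.abs_of_nonneg hXnn]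
    linarith
  · have hξpos : 0 < |ξ| := abs_pos.mpr hξ
    have hB := partB k hk ξ hξ (X:ℝ) hXnn
    refine hB.trans ?_
    set δ : ℝ := |ξ| ^ (-(1/(k:ℝ))) with hδ_def
    have hδpos : 0 < δ := Real.rpow_pos_of_pos hξpos _
    set T : ℝ := (X:ℝ) ^ k * |ξ| with hT_def
    have hT0 : (0:ℝ) ≤ T := by positivity
    have h1T : (0:ℝ) < 1 + T := by linarith
    have hpow_pos : (0:ℝ) < (1+T) ^ ((1:ℝ)/k) := Real.rpow_pos_of_pos h1T _
    have hr : (1+T) ^ (-(1/(k:ℝ))) = ((1+T) ^ ((1:ℝ)/k))⁻¹ := by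
      rw [← Real.rpow_neg h1T.le]
    rw [hr, ← div_eq_mul_inv, le_div_iff₀ hpow_pos]
    have h2le : (2:ℝ) ^ ((1:ℝ)/k) ≤ 2 := by
      calc (2:ℝ) ^ ((1:ℝ)/k) ≤ (2:ℝ) ^ (1:ℝ) :=
            Real.rpow_le_rpow_of_exponent_le one_le_two (by
              rw [div_le_one hk0]; exact_mod_cast hk)
        _ = 2 := Real.rpow_one 2
    have key : min (X:ℝ) δ * (1+T) ^ ((1:ℝ)/k) ≤ 2 * (X:ℝ) := by
      rcases le_total T 1 with hT | hT
      · have hc1 : (1+T) ^ ((1:ℝ)/k) ≤ 2 := by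
          calc (1+T) ^ ((1:ℝ)/k) ≤ (2:ℝ) ^ ((1:ℝ)/k) :=
                Real.rpow_le_rpow h1T.le (by linarith) (by positivity)
            _ ≤ 2 := h2le
        have hm0 : (0:ℝ) ≤ min (X:ℝ) δ := le_min hXnn hδpos.le
        calc min (X:ℝ) δ * (1+T) ^ ((1:ℝ)/k) ≤ (X:ℝ) * 2 :=
              mul_le_mul (min_le_left _ _) hc1 (by positivity) hXnn
          _ = 2 * (X:ℝ) := by ring
      · have hTc : T ^ ((1:ℝ)/k) = (X:ℝ) * |ξ| ^ ((1:ℝ)/k) := by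
          rw [hT_def, Real.mul_rpow (by positivity) (abs_nonneg _),
            ← Real.rpow_natCast (X:ℝ) k, ← Real.rpow_mul hXnn]
          rw [show (k:ℝ) * ((1:ℝ)/k) = 1 by field_simp]
          rw [Real.rpow_one]
        have hd1 : δ * |ξ| ^ ((1:ℝ)/k) = 1 := by
          rw [hδ_def, ← Real.rpow_add hξpos]
          rw [show -(1/(k:ℝ)) + 1/(k:ℝ) = 0 by ring]
          exact Real.rpow_zero _
        have hc1 : (1+T) ^ ((1:ℝ)/k) ≤ 2 * T ^ ((1:ℝ)/k) := by
          calc (1+T) ^ ((1:ℝ)/k) ≤ (2*T) ^ ((1:ℝ)/k) :=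
                Real.rpow_le_rpow h1T.le (by linarith) (by positivity)
            _ = (2:ℝ) ^ ((1:ℝ)/k) * T ^ ((1:ℝ)/k) := Real.mul_rpow (by norm_num) hT0
            _ ≤ 2 * T ^ ((1:ℝ)/k) :=
                mul_le_mul_of_nonneg_right h2le (Real.rpow_nonneg hT0 _)
        calc min (X:ℝ) δ * (1+T) ^ ((1:ℝ)/k)
            ≤ δ * (2 * T ^ ((1:ℝ)/k)) :=
              mul_le_mul (min_le_right _ _) hc1 (by positivity) hδpos.le
          _ = 2 * (X:ℝ) * (δ * |ξ| ^ ((1:ℝ)/k)) := by rw [hTc]; ring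
          _ = 2 * (X:ℝ) := by rw [hd1, mul_one]
    calc 2 * min (X:ℝ) δ * (1+T) ^ ((1:ℝ)/k) = 2 * (min (X:ℝ) δ * (1+T) ^ ((1:ℝ)/k)) := by ring
      _ ≤ 2 * (2 * (X:ℝ)) := by linarith
      _ = 4 * (X:ℝ) := by ring
end

section
/- For integers k ≥ 2 and d ≥ 2^k + 1, the singular series 𝔖(N) = ∑_{q=1}^∞ ∑_{1 ≤ a ≤ q, (a,q)=1} G(a/q)^d e^{-2πi N a/q} converges absolutely and satisfies 𝔖(N) ≤ A_k for a constant A_k depending only on k, uniformly in N ∈ ℕ and d ≥ 2^k + 1. -/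
noncomputable def warGauss (k q a : ℕ) : ℂ :=
  (q : ℂ)⁻¹ * ∑ r ∈ Finset.Icc 1 q, e ((a : ℝ) * (r : ℝ) ^ k / (q : ℝ))

/-- The inner sum of the singular series over `a` coprime to `q`. -/
noncomputable def innerSum (k d N q : ℕ) : ℂ :=
  ∑ a ∈ (Finset.Icc 1 q).filter (fun a => Nat.Coprime a q),
    (warGauss k q a) ^ d * e (-((N : ℝ) * a / q))

open Polynomial Finset

namespace War

lemma norm_e (x : ℝ) : ‖e x‖ = 1 := by
  rw [e, Complex.norm_exp]
  have : (2 * (Real.pi : ℂ) * Complex.I * (x : ℂ)).re = 0 := by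
    simp [Complex.mul_re, Complex.mul_im]
  rw [this, Real.exp_zero]

variable (q : ℕ) [NeZero q]

noncomputable def psi : AddChar (ZMod q) ℂ := ZMod.stdAddChar

lemma norm_psi (x : ZMod q) : ‖psi q x‖ = 1 := by
  rw [psi, ZMod.stdAddChar_apply, Circle.norm_coe]

lemma conj_psi (x : ZMod q) : (starRingEnd ℂ) (psi q x) = psi q (-x) := by
  have hq : 0 < ringChar (ZMod q) := by
    rw [ZMod.ringChar_zmod_n]; exact Nat.pos_of_ne_zero (NeZero.ne q)
  rw [AddChar.starComp_apply hq, AddChar.inv_apply]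

noncomputable def T (P : Polynomial (ZMod q)) : ℂ := ∑ x : ZMod q, psi q (P.eval x)

noncomputable def dd (h : ZMod q) (P : Polynomial (ZMod q)) : Polynomial (ZMod q) :=
  Polynomial.taylor h P - P

lemma dd_eval (h : ZMod q) (P : Polynomial (ZMod q)) (y : ZMod q) :
    (dd q h P).eval y = P.eval (y + h) - P.eval y := by
  simp [dd, Polynomial.taylor_apply, Polynomial.eval_comp]

lemma norm_T_sq_le (P : Polynomial (ZMod q)) :
    ‖T q P‖ ^ 2 ≤ ∑ h : ZMod q, ‖T q (dd q h P)‖ := by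
  have key : (T q P) * (starRingEnd ℂ) (T q P) = ∑ h : ZMod q, T q (dd q h P) := by
    rw [T, map_sum]
    simp_rw [conj_psi]
    rw [Finset.sum_mul_sum, Finset.sum_comm]
    have step1 : ∀ y : ZMod q, ∑ x : ZMod q, psi q (P.eval x) * psi q (-(P.eval y))
        = ∑ h : ZMod q, psi q ((dd q h P).eval y) := by
      intro y
      rw [← Equiv.sum_comp (Equiv.addLeft y)
        (fun x => psi q (P.eval x) * psi q (-(P.eval y)))]
      refine Finset.sum_congr rfl fun h _ => ?_
      rw [dd_eval, sub_eq_add_neg, AddChar.map_add_eq_mul]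
      rfl
    simp_rw [step1]
    rw [Finset.sum_comm]
    rfl
  have h2 : ‖T q P‖ ^ 2 = ‖T q P * (starRingEnd ℂ) (T q P)‖ := by
    rw [norm_mul, RCLike.norm_conj, sq]
  rw [h2, key]
  exact norm_sum_le _ _

lemma dd_shape (m : ℕ) (h : ZMod q) (P : Polynomial (ZMod q)) (hP : P.natDegree ≤ m + 1) :
    (dd q h P).natDegree ≤ m ∧
      (dd q h P).coeff m = ((m + 1 : ℕ) : ZMod q) * h * P.coeff (m + 1) := by
  have hcoeff : ∀ i, (dd q h P).coeff i = (Polynomial.hasseDeriv i P).eval h - P.coeff i := by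
    intro i; rw [dd, Polynomial.coeff_sub, Polynomial.taylor_coeff]
  have hA : ∀ i, m + 1 ≤ i → Polynomial.hasseDeriv i P = Polynomial.C (P.coeff i) := by
    intro i hi
    ext n
    match n with
    | 0 => simp [Polynomial.hasseDeriv_coeff]
    | n + 1 =>
      rw [Polynomial.hasseDeriv_coeff]
      have h0 : P.coeff (n + 1 + i) = 0 :=
        Polynomial.coeff_eq_zero_of_natDegree_lt (by omega)
      simp [h0, Polynomial.coeff_C]
  constructor
  · rw [Polynomial.natDegree_le_iff_coeff_eq_zero]
    intro i hi
    rw [hcoeff, hA i (by omega), Polynomial.eval_C, sub_self]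
  · have hB : Polynomial.hasseDeriv m P = Polynomial.C (P.coeff m) +
        Polynomial.C (((m + 1 : ℕ) : ZMod q) * P.coeff (m + 1)) * Polynomial.X := by
      ext n
      match n with
      | 0 => simp [Polynomial.hasseDeriv_coeff]
      | 1 =>
        rw [Polynomial.hasseDeriv_coeff]
        have hch : (1 + m).choose m = m + 1 := by
          rw [Nat.add_comm 1 m, Nat.choose_succ_self_right]
        rw [hch]
        simp [Nat.add_comm 1 m]
      | n + 2 =>
        rw [Polynomial.hasseDeriv_coeff]
        have h0 : P.coeff (n + 2 + m) = 0 :=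
          Polynomial.coeff_eq_zero_of_natDegree_lt (by omega)
        simp [h0, Polynomial.coeff_C, Polynomial.coeff_X, Polynomial.coeff_one]
    rw [hcoeff, hB]
    simp only [Polynomial.eval_add, Polynomial.eval_mul, Polynomial.eval_C, Polynomial.eval_X]
    ring

noncomputable def itd : {n : ℕ} → (Fin n → ZMod q) → Polynomial (ZMod q) → Polynomial (ZMod q)
  | 0, _, P => P
  | (_ + 1), h, P => itd (Fin.tail h) (dd q (h 0) P)

lemma itd_shape : ∀ (n : ℕ) (h : Fin n → ZMod q) (P : Polynomial (ZMod q)),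
    P.natDegree ≤ n + 1 →
    (itd q h P).natDegree ≤ 1 ∧
      (itd q h P).coeff 1 = (((n + 1).factorial : ℕ) : ZMod q) * (∏ i, h i) * P.coeff (n + 1) := by
  intro n
  induction n with
  | zero =>
    intro h P hP
    refine ⟨hP, ?_⟩
    simp [itd, Nat.factorial]
  | succ n ih =>
    intro h P hP
    obtain ⟨hd1, hd2⟩ := dd_shape q (n + 1) (h 0) P hP
    obtain ⟨hi1, hi2⟩ := ih (Fin.tail h) (dd q (h 0) P) hd1
    refine ⟨hi1, ?_⟩
    have hitd : itd q h P = itd q (Fin.tail h) (dd q (h 0) P) := rfl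
    rw [hitd, hi2, hd2, Fin.prod_univ_succ]
    have htail : ∀ i : Fin n, Fin.tail h i = h i.succ := fun i => rfl
    have hfac : (n + 1 + 1).factorial = (n + 2) * (n + 1).factorial := rfl
    rw [hfac]
    simp only [htail]
    push_cast
    ring

lemma weyl : ∀ (n : ℕ) (P : Polynomial (ZMod q)),
    ‖T q P‖ ^ (2 ^ n) ≤
      (q : ℝ) ^ (2 ^ n - n - 1) * ∑ h : Fin n → ZMod q, ‖T q (itd q h P)‖ := by
  intro n
  induction n with
  | zero =>
    intro P
    have h1 : ∑ h : Fin 0 → ZMod q, ‖T q (itd q h P)‖ = ‖T q P‖ := by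
      rw [Fintype.sum_unique]; rfl
    rw [h1]
    norm_num
  | succ n ih =>
    intro P
    have hq1 : (1 : ℝ) ≤ (q : ℝ) := by
      have := Nat.pos_of_ne_zero (NeZero.ne q); exact_mod_cast this
    have h2n : n + 1 ≤ 2 ^ n := n.lt_two_pow_self
    calc ‖T q P‖ ^ 2 ^ (n + 1) = (‖T q P‖ ^ 2) ^ 2 ^ n := by
          rw [← pow_mul, pow_succ, mul_comm (2 ^ n) 2]
      _ ≤ (∑ h : ZMod q, ‖T q (dd q h P)‖) ^ 2 ^ n := by
          exact pow_le_pow_left₀ (by positivity) (norm_T_sq_le q P) _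
      _ ≤ (q : ℝ) ^ (2 ^ n - 1) * ∑ h : ZMod q, ‖T q (dd q h P)‖ ^ 2 ^ n := by
          have hc : (((Finset.univ : Finset (ZMod q)).card) : ℝ) = (q : ℝ) := by
            simp [ZMod.card]
          have hps := pow_sum_div_card_le_sum_pow
            (s := (Finset.univ : Finset (ZMod q)))
            (f := fun h => ‖T q (dd q h P)‖) (fun i _ => norm_nonneg _) (2 ^ n - 1)
          have h2 : 2 ^ n - 1 + 1 = 2 ^ n := by omega
          rw [h2, hc, div_le_iff₀ (by positivity)] at hps
          calc (∑ h : ZMod q, ‖T q (dd q h P)‖) ^ 2 ^ n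
              ≤ (∑ h : ZMod q, ‖T q (dd q h P)‖ ^ 2 ^ n) * (q : ℝ) ^ (2 ^ n - 1) := hps
            _ = (q : ℝ) ^ (2 ^ n - 1) * ∑ h : ZMod q, ‖T q (dd q h P)‖ ^ 2 ^ n := by ring
      _ ≤ (q : ℝ) ^ (2 ^ n - 1) * ∑ h : ZMod q,
            ((q : ℝ) ^ (2 ^ n - n - 1) * ∑ t : Fin n → ZMod q, ‖T q (itd q t (dd q h P))‖) := by
          gcongr with h _
          exact ih (dd q h P)
      _ = (q : ℝ) ^ (2 ^ (n + 1) - (n + 1) - 1) *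
            ∑ h' : Fin (n + 1) → ZMod q, ‖T q (itd q h' P)‖ := by
          rw [← Finset.mul_sum, ← mul_assoc, ← pow_add]
          congr 1
          · congr 1
            omega
          · rw [← Fintype.sum_prod_type']
            refine Fintype.sum_equiv (Fin.consEquiv (fun _ => ZMod q)) _ _ fun p => ?_
            have : itd q (Fin.cons p.1 p.2 : Fin (n + 1) → ZMod q) P
                = itd q p.2 (dd q (p.1) P) := by
              simp [itd]
            simp [Fin.consEquiv, this]


lemma norm_T_linear (P : Polynomial (ZMod q)) (hP : P.natDegree ≤ 1) :
    ‖T q P‖ = if P.coeff 1 = 0 then (q : ℝ) else 0 := by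
  have hP' := Polynomial.eq_X_add_C_of_natDegree_le_one hP
  have : T q P = (∑ x : ZMod q, psi q (x * P.coeff 1)) * psi q (P.coeff 0) := by
    rw [T]
    conv_lhs => rw [hP']
    simp only [Polynomial.eval_add, Polynomial.eval_mul, Polynomial.eval_C, Polynomial.eval_X]
    simp_rw [AddChar.map_add_eq_mul, mul_comm (P.coeff 1)]
    rw [← Finset.sum_mul]
  rw [this, norm_mul, norm_psi, mul_one, psi,
    AddChar.sum_mulShift _ (ZMod.isPrimitive_stdAddChar q)]
  split_ifs with h
  · simp [ZMod.card]
  · simp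

end War

open War

lemma fact_split : ∀ (j : ℕ) (m : ℕ), m ≠ 0 → ∀ h : Fin j → ℕ, m ∣ (∏ i, h i) →
    ∃ g : Fin j → ℕ, (∀ i, g i ∣ h i) ∧ (∏ i, g i) = m := by
  intro j
  induction j with
  | zero =>
    intro m hm h hdvd
    have hm1 : m = 1 := by
      simpa using Nat.dvd_one.mp (by simpa using hdvd)
    exact ⟨fun _ => 1, fun i => i.elim0, by simp [hm1]⟩
  | succ j ih =>
    intro m hm h hdvd
    rw [Fin.prod_univ_succ] at hdvd
    set g0 := m.gcd (h 0) with hg0def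
    have hg0pos : 0 < g0 := Nat.gcd_pos_of_pos_left _ (Nat.pos_of_ne_zero hm)
    set m' := m / g0 with hm'def
    have hm'mul : g0 * m' = m := Nat.mul_div_cancel' (Nat.gcd_dvd_left m (h 0))
    have hh'mul : g0 * (h 0 / g0) = h 0 := Nat.mul_div_cancel' (Nat.gcd_dvd_right m (h 0))
    have hm'ne : m' ≠ 0 := by
      rintro h0
      rw [h0, mul_zero] at hm'mul
      exact hm hm'mul.symm
    have hco : Nat.Coprime m' (h 0 / g0) := Nat.coprime_div_gcd_div_gcd hg0pos
    have step : m' ∣ (h 0 / g0) * ∏ i : Fin j, h i.succ := by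
      have hstep : g0 * m' ∣ g0 * ((h 0 / g0) * ∏ i : Fin j, h i.succ) := by
        rw [hm'mul, ← mul_assoc, hh'mul]; exact hdvd
      exact (Nat.mul_dvd_mul_iff_left hg0pos).mp hstep
    have step2 : m' ∣ (∏ i : Fin j, h i.succ) * (h 0 / g0) := by rwa [mul_comm] at step
    have hdvd' : m' ∣ ∏ i : Fin j, h i.succ := hco.dvd_of_dvd_mul_right step2
    obtain ⟨g', hg'1, hg'2⟩ := ih m' hm'ne (Fin.tail h) hdvd'
    refine ⟨Fin.cons g0 g', ?_, ?_⟩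
    · intro i
      refine Fin.cases ?_ ?_ i
      · rw [Fin.cons_zero]; exact Nat.gcd_dvd_right m (h 0)
      · intro i'; rw [Fin.cons_succ]; exact hg'1 i'
    · rw [Fin.prod_univ_succ]
      simp only [Fin.cons_zero, Fin.cons_succ]
      have : ∏ i : Fin j, g' i = m' := hg'2
      rw [this, hm'mul]

lemma card_dvd_val_le (q d : ℕ) [NeZero q] (hd : d ∣ q) (hd1 : 1 ≤ d) :
    (Finset.univ.filter (fun x : ZMod q => d ∣ x.val)).card ≤ 2 * (q / d) := by
  have hqpos : 0 < q := Nat.pos_of_ne_zero (NeZero.ne q)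
  have hdq : d ≤ q := Nat.le_of_dvd hqpos hd
  have hcard : (Finset.univ.filter (fun x : ZMod q => d ∣ x.val)).card ≤
      (Finset.range (q / d + 1)).card := by
    apply Finset.card_le_card_of_injOn (fun x => x.val / d)
    · intro x hx
      simp only [Finset.mem_coe, Finset.mem_range]
      have h1 : x.val < q := x.val_lt
      have h2 : x.val / d ≤ q / d := Nat.div_le_div_right h1.le
      omega
    · intro x hx y hy hxy
      simp only [Finset.mem_coe, Finset.mem_filter, Finset.mem_univ, true_and] at hx hy
      have hx2 : d * (x.val / d) = x.val := Nat.mul_div_cancel' hx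
      have hy2 : d * (y.val / d) = y.val := Nat.mul_div_cancel' hy
      have hxy' : x.val / d = y.val / d := hxy
      exact ZMod.val_injective q (by rw [← hx2, ← hy2, hxy'])
  rw [Finset.card_range] at hcard
  have h1d : 1 ≤ q / d := (Nat.one_le_div_iff (by omega)).mpr hdq
  omega

lemma count_bound (j a q K : ℕ) [NeZero q] (ha : Nat.Coprime a q) (hK : 1 ≤ K) :
    (((Finset.univ : Finset (Fin j → ZMod q)).filter
        (fun h => ((K : ZMod q)) * (∏ i, h i) * (a : ZMod q) = 0)).card : ℝ) ≤
      (K : ℝ) * 2 ^ j * (q.divisors.card : ℝ) ^ j * (q : ℝ) ^ j / q := by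
  classical
  have hqpos : 0 < q := Nat.pos_of_ne_zero (NeZero.ne q)
  set g₀ := q.gcd K with hg₀
  have hgdvd : g₀ ∣ q := Nat.gcd_dvd_left q K
  have hgpos : 0 < g₀ := Nat.gcd_pos_of_pos_left _ hqpos
  set m := q / g₀ with hm
  have hmmul : g₀ * m = q := Nat.mul_div_cancel' hgdvd
  have hmpos : 0 < m := Nat.div_pos (Nat.le_of_dvd hqpos hgdvd) hgpos
  have hmdvdq : m ∣ q := Nat.div_dvd_of_dvd hgdvd
  have hgK : g₀ ≤ K := Nat.le_of_dvd (by omega) (Nat.gcd_dvd_right q K)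
  have hqKm : q ≤ K * m := by
    calc q = g₀ * m := hmmul.symm
      _ ≤ K * m := Nat.mul_le_mul_right _ hgK
  set F : Finset (Fin j → ℕ) :=
    (Fintype.piFinset fun _ => m.divisors).filter (fun g => ∏ i, g i = m) with hF
  set G : (Fin j → ℕ) → Finset (Fin j → ZMod q) := fun g =>
    Fintype.piFinset (fun i => Finset.univ.filter fun x : ZMod q => g i ∣ x.val) with hG
  have hsub : (Finset.univ : Finset (Fin j → ZMod q)).filter
      (fun h => ((K : ZMod q)) * (∏ i, h i) * (a : ZMod q) = 0) ⊆ F.biUnion G := by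
    intro h hh
    rw [Finset.mem_filter] at hh
    obtain ⟨-, hh⟩ := hh
    have hprod : ((∏ i, (h i).val : ℕ) : ZMod q) = ∏ i, h i := by
      push_cast
      exact Finset.prod_congr rfl fun i _ => ZMod.natCast_zmod_val (h i)
    have hcast : ((K * (∏ i, (h i).val) * a : ℕ) : ZMod q) = 0 := by
      rw [Nat.cast_mul, Nat.cast_mul, hprod]
      exact hh
    have hdvd : q ∣ K * (∏ i, (h i).val) * a :=
      (ZMod.natCast_eq_zero_iff _ _).mp hcast
    have hdvd2 : q ∣ K * ∏ i, (h i).val := (Nat.Coprime.dvd_of_dvd_mul_right ha.symm hdvd)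
    have hdvd3 : m ∣ ∏ i, (h i).val := by
      have h1 : g₀ * m ∣ g₀ * ((K / g₀) * ∏ i, (h i).val) := by
        rw [hmmul, ← mul_assoc, Nat.mul_div_cancel' (Nat.gcd_dvd_right q K)]
        exact hdvd2
      have h2 : m ∣ (K / g₀) * ∏ i, (h i).val := (Nat.mul_dvd_mul_iff_left hgpos).mp h1
      have hco : Nat.Coprime m (K / g₀) := Nat.coprime_div_gcd_div_gcd hgpos
      exact hco.dvd_of_dvd_mul_right (by rwa [mul_comm] at h2)
    obtain ⟨g, hg1, hg2⟩ := fact_split j m hmpos.ne' (fun i => (h i).val) hdvd3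
    rw [Finset.mem_biUnion]
    refine ⟨g, ?_, ?_⟩
    · rw [hF, Finset.mem_filter, Fintype.mem_piFinset]
      exact ⟨fun i => Nat.mem_divisors.mpr
        ⟨(Finset.dvd_prod_of_mem g (Finset.mem_univ i)).trans (dvd_of_eq hg2), hmpos.ne'⟩, hg2⟩
    · rw [hG, Fintype.mem_piFinset]
      intro i
      rw [Finset.mem_filter]
      exact ⟨Finset.mem_univ _, hg1 i⟩
  have h1 : ((Finset.univ : Finset (Fin j → ZMod q)).filter
      (fun h => ((K : ZMod q)) * (∏ i, h i) * (a : ZMod q) = 0)).card ≤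
      ∑ g ∈ F, (G g).card :=
    le_trans (Finset.card_le_card hsub) (Finset.card_biUnion_le)
  have h2 : ∀ g ∈ F, ((G g).card : ℝ) ≤ 2 ^ j * (q : ℝ) ^ j / m := by
    intro g hgF
    rw [hF, Finset.mem_filter, Fintype.mem_piFinset] at hgF
    obtain ⟨hgmem, hgprod⟩ := hgF
    have hdiv : ∀ i, g i ∣ q := fun i => (Nat.mem_divisors.mp (hgmem i)).1.trans hmdvdq
    have hpos : ∀ i, 1 ≤ g i := fun i => Nat.pos_of_mem_divisors (hgmem i)
    have hcard : (G g).card = ∏ i, (Finset.univ.filter fun x : ZMod q => g i ∣ x.val).card :=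
      Fintype.card_piFinset _
    rw [hcard]
    push_cast
    calc (∏ i, ((Finset.univ.filter fun x : ZMod q => g i ∣ x.val).card : ℝ))
        ≤ ∏ i : Fin j, (2 * ((q : ℝ) / g i)) := by
          apply Finset.prod_le_prod (fun i _ => by positivity) (fun i _ => ?_)
          have hc := card_dvd_val_le q (g i) (hdiv i) (hpos i)
          calc ((Finset.univ.filter fun x : ZMod q => g i ∣ x.val).card : ℝ)
              ≤ ((2 * (q / g i) : ℕ) : ℝ) := by exact_mod_cast hc
            _ ≤ 2 * ((q : ℝ) / g i) := by
                push_cast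
                have := Nat.cast_div_le (α := ℝ) (m := q) (n := g i)
                linarith
      _ = 2 ^ j * ((q : ℝ) ^ j / ∏ i, (g i : ℝ)) := by
          rw [Finset.prod_mul_distrib, Finset.prod_const, Finset.prod_div_distrib,
            Finset.prod_const]
          simp [Finset.card_univ]
      _ = 2 ^ j * (q : ℝ) ^ j / m := by
          have : (∏ i, (g i : ℝ)) = (m : ℝ) := by
            rw [← Nat.cast_prod, hgprod]
          rw [this, mul_div_assoc]
  have h3 : (F.card : ℝ) ≤ (q.divisors.card : ℝ) ^ j := by
    have hFle : F.card ≤ (Fintype.piFinset fun _ : Fin j => m.divisors).card :=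
      Finset.card_le_card (Finset.filter_subset _ _)
    have hpi : (Fintype.piFinset fun _ : Fin j => m.divisors).card = m.divisors.card ^ j := by
      rw [Fintype.card_piFinset]
      simp
    have hτ : m.divisors.card ≤ q.divisors.card :=
      Finset.card_le_card (Nat.divisors_subset_of_dvd hqpos.ne' hmdvdq)
    calc (F.card : ℝ) ≤ ((m.divisors.card ^ j : ℕ) : ℝ) := by
          exact_mod_cast hFle.trans (le_of_eq hpi)
      _ ≤ (q.divisors.card : ℝ) ^ j := by
          push_cast
          exact pow_le_pow_left₀ (by positivity) (by exact_mod_cast hτ) j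
  have hmain : (((Finset.univ : Finset (Fin j → ZMod q)).filter
      (fun h => ((K : ZMod q)) * (∏ i, h i) * (a : ZMod q) = 0)).card : ℝ) ≤
      (q.divisors.card : ℝ) ^ j * (2 ^ j * (q : ℝ) ^ j / m) := by
    calc (((Finset.univ : Finset (Fin j → ZMod q)).filter
        (fun h => ((K : ZMod q)) * (∏ i, h i) * (a : ZMod q) = 0)).card : ℝ)
        ≤ ∑ g ∈ F, ((G g).card : ℝ) := by exact_mod_cast h1
      _ ≤ ∑ _g ∈ F, (2 ^ j * (q : ℝ) ^ j / m) := Finset.sum_le_sum h2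
      _ = F.card * (2 ^ j * (q : ℝ) ^ j / m) := by
          rw [Finset.sum_const, nsmul_eq_mul]
      _ ≤ (q.divisors.card : ℝ) ^ j * (2 ^ j * (q : ℝ) ^ j / m) := by
          apply mul_le_mul_of_nonneg_right h3 (by positivity)
  refine hmain.trans ?_
  have hinv : (1 : ℝ) / m ≤ (K : ℝ) / q := by
    rw [div_le_div_iff₀ (by exact_mod_cast hmpos) (by exact_mod_cast hqpos)]
    have : (q : ℝ) ≤ (K : ℝ) * m := by exact_mod_cast hqKm
    linarith
  have hrw : (q.divisors.card : ℝ) ^ j * (2 ^ j * (q : ℝ) ^ j / m) =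
      ((q.divisors.card : ℝ) ^ j * 2 ^ j * (q : ℝ) ^ j) * (1 / m) := by ring
  have hrw2 : (K : ℝ) * 2 ^ j * (q.divisors.card : ℝ) ^ j * (q : ℝ) ^ j / q =
      ((q.divisors.card : ℝ) ^ j * 2 ^ j * (q : ℝ) ^ j) * ((K : ℝ) / q) := by ring
  rw [hrw, hrw2]
  exact mul_le_mul_of_nonneg_left hinv (by positivity)

lemma warGauss_eq (k q a : ℕ) [NeZero q] (hk : 1 ≤ k) :
    warGauss k q a = (q : ℂ)⁻¹ * War.T q (Polynomial.C (a : ZMod q) * Polynomial.X ^ k) := by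
  have hqpos : 0 < q := Nat.pos_of_ne_zero (NeZero.ne q)
  have hq0 : (q : ℝ) ≠ 0 := by positivity
  rw [warGauss]
  congr 1
  rw [War.T]
  simp only [Polynomial.eval_mul, Polynomial.eval_C, Polynomial.eval_pow, Polynomial.eval_X]
  have hterm : ∀ r : ℕ, psi q ((a : ZMod q) * ((r : ZMod q)) ^ k)
      = e ((a : ℝ) * (r : ℝ) ^ k / q) := by
    intro r
    have h1 : ((a : ZMod q) * ((r : ZMod q)) ^ k) = (((a * r ^ k : ℕ) : ℤ) : ZMod q) := by
      push_cast; ring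
    rw [h1, psi, ZMod.stdAddChar_coe, e]
    congr 1
    push_cast
    ring
  have hA : ∑ x : ZMod q, psi q ((a : ZMod q) * x ^ k)
      = ∑ r ∈ Finset.range q, e ((a : ℝ) * (r : ℝ) ^ k / q) := by
    refine Finset.sum_nbij' (fun (x : ZMod q) => x.val) (fun (r : ℕ) => (r : ZMod q))
      ?_ ?_ ?_ ?_ ?_
    · intro x _; exact Finset.mem_range.mpr x.val_lt
    · intro r _; exact Finset.mem_univ _
    · intro x _; exact ZMod.natCast_zmod_val x
    · intro r hr; exact ZMod.val_natCast_of_lt (Finset.mem_range.mp hr)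
    · intro x _
      conv_lhs => rw [← ZMod.natCast_zmod_val x]
      exact hterm x.val
  rw [hA]
  have g0 : e ((a : ℝ) * ((0 : ℕ) : ℝ) ^ k / q) = 1 := by
    have hz : (a : ℝ) * ((0 : ℕ) : ℝ) ^ k / q = 0 := by
      simp [zero_pow (by omega : k ≠ 0)]
    rw [hz, e]; simp
  have gq : e ((a : ℝ) * ((q : ℕ) : ℝ) ^ k / q) = 1 := by
    have hz : (a : ℝ) * ((q : ℕ) : ℝ) ^ k / q = ((a * q ^ (k - 1) : ℕ) : ℝ) := by
      obtain ⟨k', rfl⟩ : ∃ k', k = k' + 1 := ⟨k - 1, by omega⟩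
      push_cast [Nat.add_sub_cancel]
      field_simp
      ring
    rw [hz, e]
    rw [show 2 * (Real.pi : ℂ) * Complex.I * (((a * q ^ (k - 1) : ℕ) : ℝ) : ℂ)
        = ((a * q ^ (k - 1) : ℕ) : ℂ) * (2 * Real.pi * Complex.I) by push_cast; ring]
    exact Complex.exp_nat_mul_two_pi_mul_I _
  have h1 := Finset.sum_range_succ (fun r : ℕ => e ((a : ℝ) * (r : ℝ) ^ k / q)) q
  have h2 : ∑ r ∈ Finset.range (q + 1), e ((a : ℝ) * (r : ℝ) ^ k / q)
      = e ((a : ℝ) * ((0 : ℕ) : ℝ) ^ k / q) + ∑ r ∈ Finset.Icc 1 q, e ((a : ℝ) * (r : ℝ) ^ k / q) := by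
    rw [Finset.sum_range_succ' (fun r : ℕ => e ((a : ℝ) * (r : ℝ) ^ k / q)) q, add_comm]
    congr 1
    rw [← Finset.Ico_add_one_right_eq_Icc, Finset.sum_Ico_eq_sum_range]
    exact Finset.sum_congr (by first | rfl | (congr 1; omega)) fun i _ => by rw [Nat.add_comm i 1]
  have h3 := h1.symm.trans h2
  rw [g0, gq] at h3
  linear_combination -h3

lemma norm_warGauss_le_one (k q a : ℕ) : ‖warGauss k q a‖ ≤ 1 := by
  rcases Nat.eq_zero_or_pos q with hq | hq
  · subst hq; simp [warGauss]
  · rw [warGauss, norm_mul]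
    calc ‖((q : ℂ))⁻¹‖ * ‖∑ r ∈ Finset.Icc 1 q, e ((a : ℝ) * (r : ℝ) ^ k / (q : ℝ))‖
        ≤ ‖((q : ℂ))⁻¹‖ * ∑ r ∈ Finset.Icc 1 q, ‖e ((a : ℝ) * (r : ℝ) ^ k / (q : ℝ))‖ := by
          gcongr; exact norm_sum_le _ _
      _ = (q : ℝ)⁻¹ * q := by
          rw [Finset.sum_congr rfl (fun r _ => War.norm_e _), Finset.sum_const, Nat.card_Icc]
          simp
      _ ≤ 1 := by
          rw [inv_mul_cancel₀]; positivity

/-- Core estimate: `‖warGauss‖ ^ 2^(k-1) ≤ C_k τ(q)^(k-1) / q`. -/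
lemma gauss_pow_le (k q a : ℕ) [NeZero q] (hk : 2 ≤ k) (ha : Nat.Coprime a q) :
    ‖warGauss k q a‖ ^ (2 ^ (k - 1)) ≤
      ((k.factorial : ℝ) * 2 ^ (k - 1)) * (q.divisors.card : ℝ) ^ (k - 1) / q := by
  classical
  have hqpos : 0 < q := Nat.pos_of_ne_zero (NeZero.ne q)
  have hq0 : (q : ℝ) ≠ 0 := by positivity
  set j := k - 1 with hj
  have hk1 : k = j + 1 := by omega
  have hj2 : j + 1 ≤ 2 ^ j := j.lt_two_pow_self
  set τ : ℝ := (q.divisors.card : ℝ) with hτ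
  have hτ0 : 0 ≤ τ := Nat.cast_nonneg _
  set C0 : ℝ := (k.factorial : ℝ) * 2 ^ j * τ ^ j with hC0
  set P : Polynomial (ZMod q) := Polynomial.C (a : ZMod q) * Polynomial.X ^ k with hP
  have hdeg : P.natDegree ≤ j + 1 := by
    rw [hP, ← hk1]
    exact Polynomial.natDegree_C_mul_X_pow_le _ _
  have hcoeff : P.coeff (j + 1) = (a : ZMod q) := by
    rw [hP, Polynomial.coeff_C_mul, ← hk1, Polynomial.coeff_X_pow]
    simp
  set S := (Finset.univ : Finset (Fin j → ZMod q)).filter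
      (fun h => ((k.factorial : ZMod q)) * (∏ i, h i) * (a : ZMod q) = 0) with hS
  have hsum : ∑ h : Fin j → ZMod q, ‖T q (itd q h P)‖ = (q : ℝ) * (S.card : ℝ) := by
    have hterm : ∀ h : Fin j → ZMod q, ‖T q (itd q h P)‖ =
        if ((k.factorial : ZMod q)) * (∏ i, h i) * (a : ZMod q) = 0 then (q : ℝ) else 0 := by
      intro h
      obtain ⟨h1, h2⟩ := itd_shape q j h P hdeg
      rw [norm_T_linear q _ h1, h2, hcoeff, ← hk1]
    simp_rw [hterm]
    rw [← Finset.sum_filter, Finset.sum_const, nsmul_eq_mul, mul_comm]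
  have hw := weyl q j P
  rw [hsum] at hw
  have hcount := count_bound j a q (k.factorial) ha (Nat.factorial_pos k)
  have hTnorm : ‖warGauss k q a‖ = ‖T q P‖ / q := by
    rw [warGauss_eq k q a (by omega), norm_mul, norm_inv, Complex.norm_natCast,
      inv_mul_eq_div]
  have hnum : ‖T q P‖ ^ (2 ^ j) ≤ C0 * (q : ℝ) ^ (2 ^ j - 1) := by
    calc ‖T q P‖ ^ (2 ^ j) ≤ (q : ℝ) ^ (2 ^ j - j - 1) * ((q : ℝ) * (S.card : ℝ)) := hw
      _ ≤ (q : ℝ) ^ (2 ^ j - j - 1) * ((q : ℝ) * (C0 * (q : ℝ) ^ j / q)) := by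
          gcongr
      _ = C0 * ((q : ℝ) ^ (2 ^ j - j - 1) * (q : ℝ) ^ j) := by
          field_simp
      _ = C0 * (q : ℝ) ^ (2 ^ j - 1) := by
          rw [← pow_add]
          congr 2
          omega
  calc ‖warGauss k q a‖ ^ (2 ^ j) = ‖T q P‖ ^ (2 ^ j) / (q : ℝ) ^ (2 ^ j) := by
        rw [hTnorm, div_pow]
    _ ≤ (C0 * (q : ℝ) ^ (2 ^ j - 1)) / (q : ℝ) ^ (2 ^ j) := by gcongr
    _ = C0 / q := by
        rw [show (q : ℝ) ^ (2 ^ j) = (q : ℝ) ^ (2 ^ j - 1) * q by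
          rw [← pow_succ]; congr 1; omega]
        rw [mul_comm ((q : ℝ) ^ (2 ^ j - 1)) (q : ℝ)]
        exact mul_div_mul_right _ _ (by positivity)
    _ = (k.factorial : ℝ) * 2 ^ (k - 1) * τ ^ (k - 1) / q := by rw [hC0]

/-- Divisor bound: `τ(n) ≤ D n^ε`. -/
lemma divisor_bound {ε : ℝ} (hε : 0 < ε) :
    ∃ D : ℝ, 1 ≤ D ∧ ∀ q : ℕ, q ≠ 0 → (q.divisors.card : ℝ) ≤ D * (q : ℝ) ^ ε := by
  have h2 : (1 : ℝ) < (2 : ℝ) ^ ε :=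
    (Real.one_lt_rpow_iff_of_pos (by norm_num)).mpr (Or.inl ⟨by norm_num, hε⟩)
  set c : ℝ := (2 : ℝ) ^ ε - 1 with hc
  have hcpos : 0 < c := by simp only [hc]; linarith
  set B : ℝ := max 1 c⁻¹ with hB
  have hB1 : (1 : ℝ) ≤ B := le_max_left _ _
  set S : ℕ := ⌈(2 : ℝ) ^ (1 / ε)⌉₊ with hSdef
  have hD1 : (1 : ℝ) ≤ B ^ (S + 1) := by
    calc (1 : ℝ) = 1 ^ (S + 1) := by norm_num
      _ ≤ B ^ (S + 1) := pow_le_pow_left₀ (by norm_num) hB1 _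
  refine ⟨B ^ (S + 1), hD1, ?_⟩
  intro q hq
  classical
  have hfactτ : (q.divisors.card : ℕ) = ∏ p ∈ q.primeFactors, (q.factorization p + 1) :=
    Nat.card_divisors hq
  have hqeq : (q : ℝ) = ∏ p ∈ q.primeFactors, (p : ℝ) ^ (q.factorization p) := by
    conv_lhs => rw [← Nat.factorization_prod_pow_eq_self hq]
    rw [Finsupp.prod, Nat.support_factorization]
    push_cast
    rfl
  have hqrpow : (q : ℝ) ^ ε = ∏ p ∈ q.primeFactors, ((p : ℝ) ^ ε) ^ (q.factorization p) := by
    rw [hqeq, ← Real.finset_prod_rpow _ _ (fun p _ => by positivity) ε]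
    refine Finset.prod_congr rfl fun p hp => ?_
    rw [← Real.rpow_natCast (p : ℝ) (q.factorization p), ← Real.rpow_mul (by positivity),
      mul_comm, Real.rpow_mul (by positivity), Real.rpow_natCast]
  have hfac : ∀ p ∈ q.primeFactors, ((q.factorization p + 1 : ℕ) : ℝ) ≤
      (if (p : ℝ) ^ ε < 2 then B else 1) * ((p : ℝ) ^ ε) ^ (q.factorization p) := by
    intro p hp
    have hp2 : 2 ≤ p := (Nat.prime_of_mem_primeFactors hp).two_le
    have hp2' : (2 : ℝ) ≤ (p : ℝ) := by exact_mod_cast hp2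
    set m := q.factorization p with hm
    have hm0 : (0 : ℝ) ≤ (m : ℝ) := Nat.cast_nonneg _
    by_cases hcase : (p : ℝ) ^ ε < 2
    · rw [if_pos hcase]
      have h2p : (2 : ℝ) ^ ε ≤ (p : ℝ) ^ ε := Real.rpow_le_rpow (by norm_num) hp2' hε.le
      have hpow : (1 + c) ^ m ≤ ((p : ℝ) ^ ε) ^ m := by
        apply pow_le_pow_left₀ (by linarith)
        simp only [hc]; linarith
      have hlin : 1 + c * m ≤ (1 + c) ^ m := by
        have := one_add_mul_le_pow (a := c) (by linarith) m
        linarith [this]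
      have hkey : ((m : ℝ) + 1) ≤ B * (1 + c * m) := by
        rcases le_or_gt 1 c with hc1 | hc1
        · calc (m : ℝ) + 1 ≤ 1 + c * m := by nlinarith
            _ = 1 * (1 + c * m) := (one_mul _).symm
            _ ≤ B * (1 + c * m) := by
                apply mul_le_mul_of_nonneg_right hB1 (by positivity)
        · have hBc' : c⁻¹ ≤ B := le_max_right _ _
          have h1c : (1 : ℝ) ≤ c⁻¹ := by
            rw [le_inv_comm₀ (by norm_num) hcpos]
            linarith
          calc (m : ℝ) + 1 ≤ c⁻¹ + m := by linarith
            _ = c⁻¹ * (1 + c * m) := by field_simp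
            _ ≤ B * (1 + c * m) := by
                apply mul_le_mul_of_nonneg_right hBc' (by positivity)
      push_cast
      calc (m : ℝ) + 1 ≤ B * (1 + c * m) := hkey
        _ ≤ B * ((p : ℝ) ^ ε) ^ m := by
            apply mul_le_mul_of_nonneg_left (hlin.trans hpow) (by linarith)
    · rw [if_neg hcase, one_mul]
      have h2le : (2 : ℝ) ≤ (p : ℝ) ^ ε := not_lt.mp hcase
      have hnat : (m + 1 : ℕ) ≤ 2 ^ m := m.lt_two_pow_self
      calc ((m + 1 : ℕ) : ℝ) ≤ ((2 ^ m : ℕ) : ℝ) := by exact_mod_cast hnat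
        _ = (2 : ℝ) ^ m := by push_cast; rfl
        _ ≤ ((p : ℝ) ^ ε) ^ m := pow_le_pow_left₀ (by norm_num) h2le m
  have hsmall : ∀ p ∈ q.primeFactors, (p : ℝ) ^ ε < 2 → p ≤ S := by
    intro p hp hcase
    have hp2 : 2 ≤ p := (Nat.prime_of_mem_primeFactors hp).two_le
    have hple : (p : ℝ) ≤ (2 : ℝ) ^ (1 / ε) := by
      by_contra hgt
      push_neg at hgt
      have h1 : ((2 : ℝ) ^ (1 / ε)) ^ ε < (p : ℝ) ^ ε :=
        Real.rpow_lt_rpow (by positivity) hgt hε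
      have h2' : ((2 : ℝ) ^ (1 / ε)) ^ ε = 2 := by
        rw [← Real.rpow_mul (by norm_num), one_div, inv_mul_cancel₀ hε.ne', Real.rpow_one]
      rw [h2'] at h1
      linarith
    have : (p : ℝ) ≤ (S : ℝ) := hple.trans (Nat.le_ceil _)
    exact_mod_cast this
  calc (q.divisors.card : ℝ) = ∏ p ∈ q.primeFactors, ((q.factorization p + 1 : ℕ) : ℝ) := by
        rw [hfactτ]; push_cast; rfl
    _ ≤ ∏ p ∈ q.primeFactors,
          ((if (p : ℝ) ^ ε < 2 then B else 1) * ((p : ℝ) ^ ε) ^ (q.factorization p)) :=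
        Finset.prod_le_prod (fun p _ => by positivity) hfac
    _ = (∏ p ∈ q.primeFactors, (if (p : ℝ) ^ ε < 2 then B else 1)) * (q : ℝ) ^ ε := by
        rw [Finset.prod_mul_distrib, hqrpow]
    _ ≤ B ^ (S + 1) * (q : ℝ) ^ ε := by
        apply mul_le_mul_of_nonneg_right ?_ (by positivity)
        have hsub : (q.primeFactors.filter (fun p : ℕ => (p : ℝ) ^ ε < 2)) ⊆
            Finset.range (S + 1) := by
          intro p hp
          rw [Finset.mem_filter] at hp
          rw [Finset.mem_range]
          exact Nat.lt_succ_of_le (hsmall p hp.1 hp.2)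
        calc ∏ p ∈ q.primeFactors, (if (p : ℝ) ^ ε < 2 then B else 1)
            = ∏ p ∈ q.primeFactors.filter (fun p : ℕ => (p : ℝ) ^ ε < 2), B := by
              rw [Finset.prod_ite]
              simp
          _ = B ^ (q.primeFactors.filter (fun p : ℕ => (p : ℝ) ^ ε < 2)).card := by
              rw [Finset.prod_const]
          _ ≤ B ^ (S + 1) := by
              apply pow_le_pow_right₀ hB1
              calc (q.primeFactors.filter (fun p : ℕ => (p : ℝ) ^ ε < 2)).card
                  ≤ (Finset.range (S + 1)).card := Finset.card_le_card hsub
                _ = S + 1 := Finset.card_range _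

lemma innerSum_le (k d N q : ℕ) (hk : 2 ≤ k) (hd : 2 ^ k + 1 ≤ d) (hq : q ≠ 0) :
    ‖innerSum k d N q‖ ≤
      (q : ℝ) * (((k.factorial : ℝ) * 2 ^ (k - 1)) * (q.divisors.card : ℝ) ^ (k - 1) / q) ^ 2 *
        (((k.factorial : ℝ) * 2 ^ (k - 1)) * (q.divisors.card : ℝ) ^ (k - 1) / q) ^
          (((2 : ℝ) ^ (k - 1))⁻¹) := by
  haveI : NeZero q := ⟨hq⟩
  have hqpos : 0 < q := Nat.pos_of_ne_zero hq
  set ρ : ℝ := ((2 : ℝ) ^ (k - 1))⁻¹ with hρdef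
  have hρ0 : 0 < ρ := by positivity
  set W : ℝ := ((k.factorial : ℝ) * 2 ^ (k - 1)) * (q.divisors.card : ℝ) ^ (k - 1) / q with hWdef
  have hW0 : 0 ≤ W := by positivity
  have hterm : ∀ a ∈ (Finset.Icc 1 q).filter (fun a => Nat.Coprime a q),
      ‖(warGauss k q a) ^ d * e (-((N : ℝ) * a / q))‖ ≤ W ^ 2 * W ^ ρ := by
    intro a hamem
    rw [Finset.mem_filter] at hamem
    have hco : Nat.Coprime a q := hamem.2
    have hG0 : (0 : ℝ) ≤ ‖warGauss k q a‖ := norm_nonneg _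
    have hG1 : ‖warGauss k q a‖ ≤ 1 := norm_warGauss_le_one k q a
    have hGp : ‖warGauss k q a‖ ^ (2 ^ (k - 1)) ≤ W := gauss_pow_le k q a hk hco
    rw [norm_mul, norm_pow, War.norm_e, mul_one]
    have h2k : 2 ^ k = 2 ^ (k - 1) * 2 := by
      conv_lhs => rw [show k = (k - 1) + 1 by omega]
      rw [pow_succ]
    calc ‖warGauss k q a‖ ^ d ≤ ‖warGauss k q a‖ ^ (2 ^ k + 1) :=
          pow_le_pow_of_le_one hG0 hG1 hd
      _ = (‖warGauss k q a‖ ^ (2 ^ (k - 1))) ^ 2 * ‖warGauss k q a‖ := by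
          rw [h2k, pow_succ, pow_mul]
      _ ≤ W ^ 2 * W ^ ρ := by
          have hx : (‖warGauss k q a‖ ^ ((2 : ℕ) ^ (k - 1))) ^ ρ = ‖warGauss k q a‖ := by
            rw [← Real.rpow_natCast ‖warGauss k q a‖ (2 ^ (k - 1)), ← Real.rpow_mul hG0]
            rw [show (((2 : ℕ) ^ (k - 1) : ℕ) : ℝ) * ρ = 1 by
              rw [hρdef]
              push_cast
              field_simp]
            exact Real.rpow_one _
          have hGle : ‖warGauss k q a‖ ≤ W ^ ρ := by
            rw [← hx]
            exact Real.rpow_le_rpow (by positivity) hGp hρ0.le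
          exact mul_le_mul (pow_le_pow_left₀ (by positivity) hGp 2) hGle hG0 (by positivity)
  calc ‖innerSum k d N q‖
      ≤ ∑ a ∈ (Finset.Icc 1 q).filter (fun a => Nat.Coprime a q),
          ‖(warGauss k q a) ^ d * e (-((N : ℝ) * a / q))‖ := norm_sum_le _ _
    _ ≤ ∑ _a ∈ (Finset.Icc 1 q).filter (fun a => Nat.Coprime a q), W ^ 2 * W ^ ρ :=
        Finset.sum_le_sum hterm
    _ = (((Finset.Icc 1 q).filter (fun a => Nat.Coprime a q)).card : ℝ) * (W ^ 2 * W ^ ρ) := by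
        rw [Finset.sum_const, nsmul_eq_mul]
    _ ≤ (q : ℝ) * (W ^ 2 * W ^ ρ) := by
        apply mul_le_mul_of_nonneg_right ?_ (by positivity)
        have hcard : ((Finset.Icc 1 q).filter (fun a => Nat.Coprime a q)).card ≤ q := by
          calc ((Finset.Icc 1 q).filter (fun a => Nat.Coprime a q)).card
              ≤ (Finset.Icc 1 q).card := Finset.card_le_card (Finset.filter_subset _ _)
            _ = q := by rw [Nat.card_Icc]; omega
        exact_mod_cast hcard
    _ = (q : ℝ) * W ^ 2 * W ^ ρ := by ring

lemma innerSum_maj (k d N q : ℕ) (hk : 2 ≤ k) (hd : 2 ^ k + 1 ≤ d) (hq : q ≠ 0)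
    (D : ℝ) (hD1 : 1 ≤ D)
    (hτ : (q.divisors.card : ℝ) ≤
      D * (q : ℝ) ^ ((((2 : ℝ) ^ (k - 1))⁻¹) / (4 * ((k - 1 : ℕ) : ℝ)))) :
    ‖innerSum k d N q‖ ≤
      ((((k.factorial : ℝ) * 2 ^ (k - 1)) * D ^ (k - 1)) ^ 2 *
          (((k.factorial : ℝ) * 2 ^ (k - 1)) * D ^ (k - 1)) ^ (((2 : ℝ) ^ (k - 1))⁻¹)) *
        (q : ℝ) ^ (-(1 + (((2 : ℝ) ^ (k - 1))⁻¹) / 4)) := by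
  have hqpos : 0 < q := Nat.pos_of_ne_zero hq
  have hq0 : (0 : ℝ) < (q : ℝ) := by exact_mod_cast hqpos
  have hq1 : (1 : ℝ) ≤ (q : ℝ) := by exact_mod_cast hqpos
  have hkfac : (0 : ℝ) < (k.factorial : ℝ) := by exact_mod_cast Nat.factorial_pos k
  set ρ : ℝ := ((2 : ℝ) ^ (k - 1))⁻¹ with hρdef
  have hρ0 : 0 < ρ := by positivity
  have hρ1 : ρ ≤ 1 := by
    rw [hρdef]
    apply inv_le_one_of_one_le₀
    apply one_le_pow₀ (by norm_num)
  set Ck : ℝ := (k.factorial : ℝ) * 2 ^ (k - 1) with hCk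
  have hCk0 : 0 < Ck := by positivity
  set c₀ : ℝ := Ck * D ^ (k - 1) with hc₀def
  have hc₀ : 0 < c₀ := by positivity
  set τ : ℝ := (q.divisors.card : ℝ) with hτdef
  have hτ0 : 0 ≤ τ := by positivity
  set W : ℝ := Ck * τ ^ (k - 1) / q with hWdef
  have hW0 : 0 ≤ W := by positivity
  have hjR : ((k - 1 : ℕ) : ℝ) ≠ 0 := by
    have : 1 ≤ k - 1 := by omega
    have : (1 : ℝ) ≤ ((k - 1 : ℕ) : ℝ) := by exact_mod_cast this
    linarith
  have hεj : (ρ / (4 * ((k - 1 : ℕ) : ℝ))) * ((k - 1 : ℕ) : ℝ) = ρ / 4 := by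
    rw [div_mul_eq_mul_div, mul_div_mul_right _ _ hjR]
  have step1 := innerSum_le k d N q hk hd hq
  have step2 : W ≤ c₀ * (q : ℝ) ^ (ρ / 4 - 1) := by
    calc W = Ck * τ ^ (k - 1) / q := rfl
      _ ≤ Ck * (D * (q : ℝ) ^ (ρ / (4 * ((k - 1 : ℕ) : ℝ)))) ^ (k - 1) / q := by
          gcongr
      _ = c₀ * (q : ℝ) ^ (ρ / 4 - 1) := by
          rw [mul_pow, ← Real.rpow_natCast ((q : ℝ) ^ (ρ / (4 * ((k - 1 : ℕ) : ℝ)))) (k - 1),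
            ← Real.rpow_mul hq0.le, hεj, Real.rpow_sub hq0, Real.rpow_one]
          ring
  set s : ℝ := ρ / 4 - 1 with hsdef
  set u : ℝ := c₀ * (q : ℝ) ^ s with hudef
  have hQs0 : (0 : ℝ) ≤ (q : ℝ) ^ s := Real.rpow_nonneg hq0.le _
  have hu0 : 0 ≤ u := by positivity
  have hmain : ‖innerSum k d N q‖ ≤ (q : ℝ) * u ^ 2 * u ^ ρ := by
    refine step1.trans ?_
    have h1 : W ^ 2 ≤ u ^ 2 := pow_le_pow_left₀ hW0 step2 2
    have h2 : W ^ ρ ≤ u ^ ρ := Real.rpow_le_rpow hW0 step2 hρ0.le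
    have h3 := mul_le_mul h1 h2 (Real.rpow_nonneg hW0 ρ) (by positivity)
    calc (q : ℝ) * W ^ 2 * W ^ ρ = (q : ℝ) * (W ^ 2 * W ^ ρ) := by ring
      _ ≤ (q : ℝ) * (u ^ 2 * u ^ ρ) := mul_le_mul_of_nonneg_left h3 hq0.le
      _ = (q : ℝ) * u ^ 2 * u ^ ρ := by ring
  have e1 : u ^ ρ = c₀ ^ ρ * ((q : ℝ) ^ s) ^ ρ := Real.mul_rpow hc₀.le hQs0
  have e2 : ((q : ℝ) ^ s) ^ (2 : ℕ) = (q : ℝ) ^ (s * 2) := by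
    rw [← Real.rpow_natCast ((q : ℝ) ^ s) 2, ← Real.rpow_mul hq0.le]
    norm_num
  have e3 : ((q : ℝ) ^ s) ^ ρ = (q : ℝ) ^ (s * ρ) := by
    rw [← Real.rpow_mul hq0.le]
  have e4 : (q : ℝ) * ((q : ℝ) ^ (s * 2) * (q : ℝ) ^ (s * ρ)) =
      (q : ℝ) ^ (1 + (s * 2 + s * ρ)) := by
    rw [Real.rpow_add hq0, Real.rpow_add hq0, Real.rpow_one]
  have hcomb : (q : ℝ) * u ^ 2 * u ^ ρ = (c₀ ^ 2 * c₀ ^ ρ) * (q : ℝ) ^ (1 + (s * 2 + s * ρ)) := by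
    rw [hudef, mul_pow, e1, e2, e3, ← e4]
    ring
  have hexp : 1 + (s * 2 + s * ρ) ≤ -(1 + ρ / 4) := by
    rw [hsdef]
    nlinarith [mul_nonneg hρ0.le (sub_nonneg.mpr hρ1)]
  calc ‖innerSum k d N q‖ ≤ (q : ℝ) * u ^ 2 * u ^ ρ := hmain
    _ = (c₀ ^ 2 * c₀ ^ ρ) * (q : ℝ) ^ (1 + (s * 2 + s * ρ)) := hcomb
    _ ≤ (c₀ ^ 2 * c₀ ^ ρ) * (q : ℝ) ^ (-(1 + ρ / 4)) := by
        apply mul_le_mul_of_nonneg_left ?_ (by positivity)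
        exact Real.rpow_le_rpow_of_exponent_le hq1 hexp
    _ = ((((k.factorial : ℝ) * 2 ^ (k - 1)) * D ^ (k - 1)) ^ 2 *
          (((k.factorial : ℝ) * 2 ^ (k - 1)) * D ^ (k - 1)) ^ ρ) *
        (q : ℝ) ^ (-(1 + ρ / 4)) := by rw [hc₀def, hCk]

theorem singular_series_abs_convergence_and_upper_bound (k : ℕ) (hk : 2 ≤ k) :
    ∃ A : ℝ, 0 < A ∧ ∀ d : ℕ, 2 ^ k + 1 ≤ d → ∀ N : ℕ,
      Summable (fun q : ℕ => ‖innerSum k d N q‖) ∧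
      ‖∑' q : ℕ, innerSum k d N q‖ ≤ A := by
  classical
  have hjpos : (0 : ℝ) < ((k - 1 : ℕ) : ℝ) := by
    have : 0 < k - 1 := by omega
    exact_mod_cast this
  have hε : 0 < (((2 : ℝ) ^ (k - 1))⁻¹) / (4 * ((k - 1 : ℕ) : ℝ)) := by positivity
  obtain ⟨D, hD1, hD⟩ := divisor_bound hε
  have hD0 : (0 : ℝ) < D := lt_of_lt_of_le one_pos hD1
  set ρ : ℝ := ((2 : ℝ) ^ (k - 1))⁻¹ with hρdef
  have hρ0 : 0 < ρ := by positivity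
  have hkfac : (0 : ℝ) < (k.factorial : ℝ) := by exact_mod_cast Nat.factorial_pos k
  set E : ℝ := (((k.factorial : ℝ) * 2 ^ (k - 1)) * D ^ (k - 1)) ^ 2 *
      (((k.factorial : ℝ) * 2 ^ (k - 1)) * D ^ (k - 1)) ^ ρ with hEdef
  have hE0 : 0 ≤ E := by positivity
  have hMajS : Summable (fun q : ℕ => E * (q : ℝ) ^ (-(1 + ρ / 4))) := by
    apply Summable.mul_left
    rw [Real.summable_nat_rpow]
    linarith
  refine ⟨1 + ∑' q : ℕ, E * (q : ℝ) ^ (-(1 + ρ / 4)), ?_, ?_⟩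
  · have h0 : 0 ≤ ∑' q : ℕ, E * (q : ℝ) ^ (-(1 + ρ / 4)) :=
      tsum_nonneg (fun q => by positivity)
    linarith
  intro d hd N
  have hbound : ∀ q : ℕ, ‖innerSum k d N q‖ ≤ E * (q : ℝ) ^ (-(1 + ρ / 4)) := by
    intro q
    rcases eq_or_ne q 0 with rfl | hq
    · have h0 : innerSum k d N 0 = 0 := by simp [innerSum]
      rw [h0, norm_zero]
      positivity
    · exact innerSum_maj k d N q hk hd hq D hD1 (hD q hq)
  have hsum1 : Summable (fun q : ℕ => ‖innerSum k d N q‖) :=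
    Summable.of_nonneg_of_le (fun q => norm_nonneg _) hbound hMajS
  refine ⟨hsum1, ?_⟩
  have h1 : ‖∑' q : ℕ, innerSum k d N q‖ ≤ ∑' q : ℕ, ‖innerSum k d N q‖ :=
    norm_tsum_le_tsum_norm hsum1
  have h2 : ∑' q : ℕ, ‖innerSum k d N q‖ ≤ ∑' q : ℕ, E * (q : ℝ) ^ (-(1 + ρ / 4)) :=
    Summable.tsum_le_tsum hbound hsum1 hMajS
  linarith
end
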